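/- Let p₁, p₂, p₃ be real numbers (candidate values for E[XY], E[YZ], E[XZ]). Then there exists a probability measure P on {−1,1}³ whose coordinate random variables X, Y, Z satisfy E[X] = E[Y] = E[Z] = 0, E[XY] = p₁, E[YZ] = p₂, and E[XZ] = p₃, if and only if −1 ≤ p₁ + p₂ + p₃ ≤ 1 + 2·min(p₁, p₂, p₃). -/
import Mathlib

abbrev SignTriple : Type := ({-1, 1} : Finset ℝ) × ({-1, 1} : Finset ℝ) × ({-1, 1} : Finset ℝ)

lemma hm1 : (-1 : ℝ) ∈ ({-1, 1} : Finset ℝ) := by simp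
lemma hm2 : (1 : ℝ) ∈ ({-1, 1} : Finset ℝ) := by simp

lemma sum_T (g : ({-1, 1} : Finset ℝ) → ℝ) :
    ∑ x, g x = g ⟨-1, hm1⟩ + g ⟨1, hm2⟩ := by
  have hu : (Finset.univ : Finset ({-1, 1} : Finset ℝ)) =
      {⟨-1, hm1⟩, ⟨1, hm2⟩} := by
    symm
    rw [Finset.eq_univ_iff_forall]
    rintro ⟨v, hv⟩
    simp only [Finset.mem_insert, Finset.mem_singleton] at hv ⊢
    rcases hv with h | h <;> simp [Subtype.ext_iff, h]
  rw [hu, Finset.sum_pair (by norm_num [Subtype.ext_iff] : (⟨-1, hm1⟩ : ({-1,1}:Finset ℝ)) ≠ ⟨1, hm2⟩)]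

lemma sum_eight (f : SignTriple → ℝ) :
    ∑ s, f s =
      f ⟨⟨-1, hm1⟩, ⟨-1, hm1⟩, ⟨-1, hm1⟩⟩ + f ⟨⟨-1, hm1⟩, ⟨-1, hm1⟩, ⟨1, hm2⟩⟩ +
      f ⟨⟨-1, hm1⟩, ⟨1, hm2⟩, ⟨-1, hm1⟩⟩ + f ⟨⟨-1, hm1⟩, ⟨1, hm2⟩, ⟨1, hm2⟩⟩ +
      f ⟨⟨1, hm2⟩, ⟨-1, hm1⟩, ⟨-1, hm1⟩⟩ + f ⟨⟨1, hm2⟩, ⟨-1, hm1⟩, ⟨1, hm2⟩⟩ +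
      f ⟨⟨1, hm2⟩, ⟨1, hm2⟩, ⟨-1, hm1⟩⟩ + f ⟨⟨1, hm2⟩, ⟨1, hm2⟩, ⟨1, hm2⟩⟩ := by
  rw [Fintype.sum_prod_type]
  simp_rw [Fintype.sum_prod_type]
  rw [sum_T]
  simp_rw [sum_T]
  ring

theorem suppes_zanotti_inequalities (p₁ p₂ p₃ : ℝ) :
    (∃ p : SignTriple → ℝ,
      (∀ s, 0 ≤ p s) ∧ (∑ s, p s = 1) ∧
      (∑ s, p s * (s.1 : ℝ)) = 0 ∧
      (∑ s, p s * (s.2.1 : ℝ)) = 0 ∧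
      (∑ s, p s * (s.2.2 : ℝ)) = 0 ∧
      (∑ s, p s * ((s.1 : ℝ) * (s.2.1 : ℝ))) = p₁ ∧
      (∑ s, p s * ((s.2.1 : ℝ) * (s.2.2 : ℝ))) = p₂ ∧
      (∑ s, p s * ((s.1 : ℝ) * (s.2.2 : ℝ))) = p₃) ↔
    (-1 ≤ p₁ + p₂ + p₃ ∧ p₁ + p₂ + p₃ ≤ 1 + 2 * min p₁ (min p₂ p₃)) := by
  constructor
  · rintro ⟨p, hpos, h1, hX, hY, hZ, hXY, hYZ, hXZ⟩
    rw [sum_eight] at h1 hX hY hZ hXY hYZ hXZ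
    norm_num at h1 hX hY hZ hXY hYZ hXZ
    have n1 := hpos ⟨⟨-1, hm1⟩, ⟨-1, hm1⟩, ⟨-1, hm1⟩⟩
    have n2 := hpos ⟨⟨-1, hm1⟩, ⟨-1, hm1⟩, ⟨1, hm2⟩⟩
    have n3 := hpos ⟨⟨-1, hm1⟩, ⟨1, hm2⟩, ⟨-1, hm1⟩⟩
    have n4 := hpos ⟨⟨-1, hm1⟩, ⟨1, hm2⟩, ⟨1, hm2⟩⟩
    have n5 := hpos ⟨⟨1, hm2⟩, ⟨-1, hm1⟩, ⟨-1, hm1⟩⟩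
    have n6 := hpos ⟨⟨1, hm2⟩, ⟨-1, hm1⟩, ⟨1, hm2⟩⟩
    have n7 := hpos ⟨⟨1, hm2⟩, ⟨1, hm2⟩, ⟨-1, hm1⟩⟩
    have n8 := hpos ⟨⟨1, hm2⟩, ⟨1, hm2⟩, ⟨1, hm2⟩⟩
    constructor
    · linarith
    · rcases le_total p₂ p₃ with h23 | h23 <;>
        [rw [min_eq_left h23]; rw [min_eq_right h23]] <;>
      rcases le_total p₁ p₂ with h12 | h12 <;>
      rcases le_total p₁ p₃ with h13 | h13 <;>
      simp [min_eq_left, min_eq_right, h12, h13] <;> linarith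
  · rintro ⟨hlo, hhi⟩
    have m1 : min p₁ (min p₂ p₃) ≤ p₁ := min_le_left _ _
    have m2 : min p₁ (min p₂ p₃) ≤ p₂ := le_trans (min_le_right _ _) (min_le_left _ _)
    have m3 : min p₁ (min p₂ p₃) ≤ p₃ := le_trans (min_le_right _ _) (min_le_right _ _)
    refine ⟨fun s => (1 + (s.1 : ℝ) * (s.2.1 : ℝ) * p₁ + (s.2.1 : ℝ) * (s.2.2 : ℝ) * p₂
        + (s.1 : ℝ) * (s.2.2 : ℝ) * p₃) / 8, ?_, ?_, ?_, ?_, ?_, ?_, ?_, ?_⟩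
    · rintro ⟨⟨x, hx⟩, ⟨y, hy⟩, ⟨z, hz⟩⟩
      simp only [Finset.mem_insert, Finset.mem_singleton] at hx hy hz
      rcases hx with rfl | rfl <;> rcases hy with rfl | rfl <;> rcases hz with rfl | rfl <;>
        simp <;> linarith
    all_goals rw [sum_eight]
    all_goals norm_num
    all_goals ring_nf
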